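/- Let C ∈ ℝ^{m×n} with rank(C) ≥ 2, and let x₁ ∈ ℝⁿ, y₁ ∈ ℝᵐ satisfy y₁ᵀCx₁ ≠ 0. Define C₂ = C − (y₁ᵀCx₁)⁻¹·(Cx₁)(y₁ᵀC). Then a vector z ∈ ℝⁿ lies in the column space of C₂ᵀ (i.e., the row space of C₂) if and only if z lies in the column space of Cᵀ and z is orthogonal to x₁. -/

import Mathlib

open Matrix

lemma vecMul_smulM {m n : ℕ} (y : Fin m → ℝ) (c : ℝ) (A : Matrix (Fin m) (Fin n) ℝ) :
    Matrix.vecMul y (c • A) = c • Matrix.vecMul y A := by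
  funext j
  simp [Matrix.vecMul, dotProduct, Finset.mul_sum, mul_left_comm]

lemma vecMul_vecMulVec' {m n : ℕ} (y u : Fin m → ℝ) (v : Fin n → ℝ) :
    Matrix.vecMul y (Matrix.vecMulVec u v) = (y ⬝ᵥ u) • v := by
  funext j
  simp [Matrix.vecMul, dotProduct, Matrix.vecMulVec_apply, Finset.sum_mul, mul_assoc]

theorem stmt3 {m n : ℕ} (C : Matrix (Fin m) (Fin n) ℝ) (hC : 2 ≤ C.rank)
    (x₁ : Fin n → ℝ) (y₁ : Fin m → ℝ) (hw : y₁ ⬝ᵥ C.mulVec x₁ ≠ 0)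
    (C₂ : Matrix (Fin m) (Fin n) ℝ)
    (hC₂ : C₂ = C - (y₁ ⬝ᵥ C.mulVec x₁)⁻¹ •
      Matrix.vecMulVec (C.mulVec x₁) (C.vecMul y₁))
    (z : Fin n → ℝ) :
    (∃ y : Fin m → ℝ, C₂.vecMul y = z) ↔
      (∃ y : Fin m → ℝ, C.vecMul y = z) ∧ z ⬝ᵥ x₁ = 0 := by
  subst hC₂
  set α := y₁ ⬝ᵥ C.mulVec x₁ with hα
  have key : ∀ y : Fin m → ℝ,
      Matrix.vecMul y (C - α⁻¹ • Matrix.vecMulVec (C.mulVec x₁) (C.vecMul y₁)) =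
        Matrix.vecMul y C - (α⁻¹ * (y ⬝ᵥ C.mulVec x₁)) • Matrix.vecMul y₁ C := by
    intro y
    rw [Matrix.vecMul_sub, vecMul_smulM, vecMul_vecMulVec', smul_smul]
  constructor
  · rintro ⟨y, rfl⟩
    rw [key]
    constructor
    · exact ⟨y - (α⁻¹ * (y ⬝ᵥ C.mulVec x₁)) • y₁, by
        rw [Matrix.sub_vecMul, Matrix.smul_vecMul]⟩
    · rw [sub_dotProduct, smul_dotProduct, ← Matrix.dotProduct_mulVec,
        ← Matrix.dotProduct_mulVec, ← hα]
      rw [smul_eq_mul]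
      field_simp
      ring
  · rintro ⟨⟨y, rfl⟩, hz⟩
    rw [← Matrix.dotProduct_mulVec] at hz
    exact ⟨y, by rw [key, hz, mul_zero, zero_smul, sub_zero]⟩
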